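/- Let n ∈ {1,2,3}, a₁ = -1, a₃ = 1, a₂ ∈ ℝ, and let φ ∈ H¹(ℝⁿ)\{0} satisfy both K(φ) = 0 and P(φ) = 0, where K(φ) = ‖∇φ‖² + ‖φ‖³_{L³} - a₂‖φ‖⁴_{L⁴} - ‖φ‖⁵_{L⁵} and P(φ) = ‖∇φ‖² + (n/6)‖φ‖³_{L³} - (n a₂/4)‖φ‖⁴_{L⁴} - (3n/10)‖φ‖⁵_{L⁵}. Then d/dλ K(φ^λ)|_{λ=1} < 0, where φ^λ(x) = λ^{n/2}φ(λx). -/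

import Mathlib

open MeasureTheory

noncomputable def gradSq (n : ℕ) (v : EuclideanSpace ℝ (Fin n) → ℝ) : ℝ :=
  ∫ x, ‖fderiv ℝ v x‖^2

noncomputable def lpP (n : ℕ) (p : ℕ) (v : EuclideanSpace ℝ (Fin n) → ℝ) : ℝ :=
  ∫ x, |v x| ^ p

/-- Nehari functional `K`. -/
noncomputable def Kf (n : ℕ) (a₂ : ℝ) (v : EuclideanSpace ℝ (Fin n) → ℝ) : ℝ :=
  gradSq n v + lpP n 3 v - a₂ * lpP n 4 v - lpP n 5 v

noncomputable def Jf (n : ℕ) (v : EuclideanSpace ℝ (Fin n) → ℝ) : ℝ :=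
  (1/4) * gradSq n v + (1/12) * lpP n 3 v + (1/20) * lpP n 5 v

/-- Action functional `S`. -/
noncomputable def Sf (n : ℕ) (a₂ : ℝ) (v : EuclideanSpace ℝ (Fin n) → ℝ) : ℝ :=
  (1/2) * gradSq n v + (1/3) * lpP n 3 v - (a₂/4) * lpP n 4 v - (1/5) * lpP n 5 v

/-- Pohozhaev functional `P`. -/
noncomputable def Pf (n : ℕ) (a₂ : ℝ) (v : EuclideanSpace ℝ (Fin n) → ℝ) : ℝ :=
  gradSq n v + ((n : ℝ)/6) * lpP n 3 v - ((n : ℝ) * a₂/4) * lpP n 4 v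
    - (3 * (n : ℝ)/10) * lpP n 5 v

/-- Membership in `X = Ḣ¹ ∩ L³` together with the integrabilities needed to make
all the functionals well defined. -/
def Adm (n : ℕ) (v : EuclideanSpace ℝ (Fin n) → ℝ) : Prop :=
  Differentiable ℝ v ∧ MemLp (fun x => ‖fderiv ℝ v x‖) 2 volume ∧
    MemLp v 3 volume ∧ MemLp v 4 volume ∧ MemLp v 5 volume

/-- The rescaling `v^λ(x) = λ^{n/2} v (λ x)`. -/
noncomputable def scal (n : ℕ) (l : ℝ) (v : EuclideanSpace ℝ (Fin n) → ℝ) :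
    EuclideanSpace ℝ (Fin n) → ℝ :=
  fun x => l ^ ((n : ℝ)/2) * v (l • x)

/-- Scaling law for the `Lᵖ` functionals. -/
lemma lp_scal (n : ℕ) (p : ℕ) (v : EuclideanSpace ℝ (Fin n) → ℝ) {l : ℝ} (hl : 0 < l) :
    lpP n p (scal n l v) = l ^ ((p : ℝ) * n / 2 - n) * lpP n p v := by
  unfold lpP scal
  have h1 : ∀ x : EuclideanSpace ℝ (Fin n), |l ^ ((n:ℝ)/2) * v (l • x)| ^ p
      = l ^ ((n:ℝ)/2 * p) * |v (l • x)| ^ p := by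
    intro x
    rw [abs_mul, mul_pow, abs_of_pos (Real.rpow_pos_of_pos hl _),
      ← Real.rpow_natCast (l ^ ((n:ℝ)/2)) p, ← Real.rpow_mul hl.le]
  simp_rw [h1]
  rw [integral_const_mul, MeasureTheory.Measure.integral_comp_smul volume (fun y => |v y| ^ p) l,
    finrank_euclideanSpace_fin, smul_eq_mul, ← mul_assoc]
  congr 1
  rw [abs_of_pos (by positivity), ← Real.rpow_natCast l n, ← Real.rpow_neg hl.le,
    ← Real.rpow_add hl]
  congr 1
  ring

/-- Scaling law for the gradient term. -/
lemma grad_scal (n : ℕ) (v : EuclideanSpace ℝ (Fin n) → ℝ) (hv : Differentiable ℝ v)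
    {l : ℝ} (hl : 0 < l) :
    gradSq n (scal n l v) = l ^ (2:ℝ) * gradSq n v := by
  unfold gradSq scal
  set c := l ^ ((n:ℝ)/2) with hc
  have hcpos : 0 < c := Real.rpow_pos_of_pos hl _
  have hg : ∀ x : EuclideanSpace ℝ (Fin n),
      fderiv ℝ (fun x => v (l • x)) x = l • fderiv ℝ v (l • x) := by
    intro x
    have h1 : fderiv ℝ (fun x : EuclideanSpace ℝ (Fin n) => v (l • x)) x
        = (fderiv ℝ v (l • x)).comp (l • ContinuousLinearMap.id ℝ (EuclideanSpace ℝ (Fin n))) := by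
      rw [show (fun x : EuclideanSpace ℝ (Fin n) => v (l • x))
          = v ∘ (l • ContinuousLinearMap.id ℝ (EuclideanSpace ℝ (Fin n))) by ext y; simp]
      rw [fderiv_comp x (hv _) ((l • ContinuousLinearMap.id ℝ
        (EuclideanSpace ℝ (Fin n))).differentiableAt),
        ContinuousLinearMap.fderiv]
      rfl
    rw [h1]
    ext y
    simp
  have hf : ∀ x : EuclideanSpace ℝ (Fin n),
      ‖fderiv ℝ (fun x => c * v (l • x)) x‖ ^ 2
        = c ^ 2 * l ^ 2 * ‖fderiv ℝ v (l • x)‖ ^ 2 := by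
    intro x
    rw [fderiv_const_mul (by exact (hv _).comp x (by fun_prop)) c]
    rw [hg x]
    rw [norm_smul, norm_smul]
    simp only [Real.norm_eq_abs, abs_of_pos hcpos, abs_of_pos hl]
    ring
  simp_rw [hf]
  rw [integral_const_mul, MeasureTheory.Measure.integral_comp_smul volume
    (fun y => ‖fderiv ℝ v y‖ ^ 2) l, finrank_euclideanSpace_fin, smul_eq_mul, ← mul_assoc]
  congr 1
  rw [abs_of_pos (by positivity), hc, ← Real.rpow_natCast (l ^ ((n:ℝ)/2)) 2,
    ← Real.rpow_mul hl.le, ← Real.rpow_natCast l 2, ← Real.rpow_natCast l n,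
    ← Real.rpow_neg hl.le, ← Real.rpow_add hl, ← Real.rpow_add hl]
  congr 1
  push_cast
  ring

/-- Positivity of the `L³` functional for nonzero continuous functions. -/
lemma lp3_pos (n : ℕ) (φ : EuclideanSpace ℝ (Fin n) → ℝ) (hd : Differentiable ℝ φ)
    (h3 : MemLp φ 3 volume) (hφ0 : φ ≠ 0) : 0 < lpP n 3 φ := by
  have hint : Integrable (fun x => |φ x| ^ 3) volume := by
    have := h3.integrable_norm_rpow (by norm_num) (by norm_num)
    have h : (fun x : EuclideanSpace ℝ (Fin n) => ‖φ x‖ ^ ((3:ENNReal).toReal))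
        = fun x => |φ x| ^ 3 := by
      ext x
      rw [show ((3:ENNReal).toReal) = ((3:ℕ):ℝ) by norm_num, Real.rpow_natCast]
      norm_num
    rwa [h] at this
  rw [lpP, integral_pos_iff_support_of_nonneg (fun x => by positivity) hint]
  have hsupp : Function.support (fun x => |φ x| ^ 3) = Function.support φ := by
    ext x
    simp [Function.mem_support, pow_eq_zero_iff, abs_eq_zero]
  rw [hsupp]
  exact hd.continuous.isOpen_support.measure_pos volume
    (Function.support_nonempty_iff.mpr hφ0)

theorem stmt11 (n : ℕ) (hn : n ∈ ({1, 2, 3} : Set ℕ)) (a₂ : ℝ)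
    (φ : EuclideanSpace ℝ (Fin n) → ℝ)
    (hφ : Adm n φ) (hL2 : MemLp φ 2 volume) (hφ0 : φ ≠ 0)
    (hK : Kf n a₂ φ = 0) (hP : Pf n a₂ φ = 0) :
    deriv (fun l : ℝ => Kf n a₂ (scal n l φ)) 1 < 0 := by
  obtain ⟨hd, hgrad, h3, h4, h5⟩ := hφ
  have hL3pos : 0 < lpP n 3 φ := lp3_pos n φ hd h3 hφ0
  have hGnn : 0 ≤ gradSq n φ := integral_nonneg fun x => by positivity
  have hL5nn : 0 ≤ lpP n 5 φ := integral_nonneg fun x => by positivity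
  have hn1 : 1 ≤ (n:ℝ) := by
    simp only [Set.mem_insert_iff, Set.mem_singleton_iff] at hn
    rcases hn with h | h | h <;> subst h <;> norm_num
  set F : ℝ → ℝ := fun l => l ^ (2:ℝ) * gradSq n φ + l ^ ((n:ℝ)/2) * lpP n 3 φ
      - a₂ * lpP n 4 φ * l ^ ((n:ℝ)) - lpP n 5 φ * l ^ (3*(n:ℝ)/2) with hF
  have heq : ∀ l ∈ Set.Ioi (0:ℝ), Kf n a₂ (scal n l φ) = F l := by
    intro l hl
    rw [Set.mem_Ioi] at hl
    unfold Kf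
    rw [grad_scal n φ hd hl, lp_scal n 3 φ hl, lp_scal n 4 φ hl, lp_scal n 5 φ hl, hF,
      show ((3:ℕ):ℝ) * n / 2 - n = (n:ℝ)/2 by push_cast; ring,
      show ((4:ℕ):ℝ) * n / 2 - n = (n:ℝ) by push_cast; ring,
      show ((5:ℕ):ℝ) * n / 2 - n = 3*(n:ℝ)/2 by push_cast; ring]
    ring
  have hev : (fun l : ℝ => Kf n a₂ (scal n l φ)) =ᶠ[nhds 1] F :=
    Filter.eventuallyEq_of_mem (isOpen_Ioi.mem_nhds (by norm_num : (1:ℝ) ∈ Set.Ioi 0)) heq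
  rw [hev.deriv_eq]
  have hrp : ∀ p : ℝ, HasDerivAt (fun l : ℝ => l ^ p) p 1 := by
    intro p
    have := Real.hasDerivAt_rpow_const (x := (1:ℝ)) (p := p) (Or.inl one_ne_zero)
    simpa using this
  have hD : HasDerivAt F (2 * gradSq n φ + (n:ℝ)/2 * lpP n 3 φ
      - a₂ * lpP n 4 φ * (n:ℝ) - lpP n 5 φ * (3*(n:ℝ)/2)) 1 :=
    ((((hrp 2).mul_const (gradSq n φ)).add ((hrp _).mul_const (lpP n 3 φ))).sub
      ((hrp _).const_mul (a₂ * lpP n 4 φ))).sub ((hrp _).const_mul (lpP n 5 φ))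
  rw [hD.deriv]
  have hP' : gradSq n φ + ((n : ℝ)/6) * lpP n 3 φ - ((n : ℝ) * a₂/4) * lpP n 4 φ
      - (3 * (n : ℝ)/10) * lpP n 5 φ = 0 := hP
  have hnL3 : lpP n 3 φ ≤ (n:ℝ) * lpP n 3 φ := le_mul_of_one_le_left hL3pos.le hn1
  have hnL5 : 0 ≤ (n:ℝ) * lpP n 5 φ := mul_nonneg (by linarith) hL5nn
  linarith
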